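/- (Remark 3.2, case d=3; convergence of the high-energy expansion.) There exists κ₀ > 0 such that for all κ ≥ κ₀ the matrix A(κ) is invertible and for all k, ℓ ∈ ℝ³ with |k| = |ℓ| = κ the series Σ_{m=0}^∞ (−4πi)^m C_m(k,ℓ) κ^{−m−1} converges absolutely with f(k,ℓ) = −(i/(2π²)) Σ_{m=0}^∞ (−4πi)^m C_m(k,ℓ) κ^{−m−1}. -/

import Mathlib

open Complex Finset Matrix
open scoped NNReal

noncomputable section

/-- The matrix `A(κ)` for a three-dimensional multipoint potential:
`A(κ)_{jj} = α_j - iκ/(4π)`,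
`A(κ)_{jj'} = -e^{iκ‖y_j - y_{j'}‖}/(4π‖y_j - y_{j'}‖)` for `j ≠ j'`. -/
def A3 (n : ℕ) (y : Fin n → EuclideanSpace ℝ (Fin 3)) (α : Fin n → ℂ) (κ : ℝ) :
    Matrix (Fin n) (Fin n) ℂ :=
  fun j j' =>
    if j = j' then α j - Complex.I * κ / (4 * Real.pi)
    else -Complex.exp (Complex.I * κ * ‖y j - y j'‖) / (4 * Real.pi * ‖y j - y j'‖)

/-- `q(k) = A(κ)⁻¹ b(k)` with `b(k)_j = -e^{i k·y_j}`. -/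
def q3 (n : ℕ) (y : Fin n → EuclideanSpace ℝ (Fin 3)) (α : Fin n → ℂ) (κ : ℝ)
    (k : EuclideanSpace ℝ (Fin 3)) : Fin n → ℂ :=
  (A3 n y α κ)⁻¹ *ᵥ fun j => -Complex.exp (Complex.I * (inner ℝ k (y j) : ℝ))

/-- The scattering amplitude `f(k,ℓ) = (2π)⁻³ Σ_j q_j(k) e^{-iℓ·y_j}`. -/
def f3 (n : ℕ) (y : Fin n → EuclideanSpace ℝ (Fin 3)) (α : Fin n → ℂ) (κ : ℝ)
    (k ℓ : EuclideanSpace ℝ (Fin 3)) : ℂ :=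
  ((2 * Real.pi : ℂ) ^ 3)⁻¹ *
    ∑ j, q3 n y α κ k j * Complex.exp (-Complex.I * (inner ℝ ℓ (y j) : ℝ))

/-- The matrix `W(κ)`: `W(κ)_{jj} = α_j`,
`W(κ)_{jj'} = -e^{iκ‖y_j - y_{j'}‖}/(4π‖y_j - y_{j'}‖)` for `j ≠ j'`. -/
def W3 (n : ℕ) (y : Fin n → EuclideanSpace ℝ (Fin 3)) (α : Fin n → ℂ) (κ : ℝ) :
    Matrix (Fin n) (Fin n) ℂ :=
  fun j j' =>
    if j = j' then α j
    else -Complex.exp (Complex.I * κ * ‖y j - y j'‖) / (4 * Real.pi * ‖y j - y j'‖)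

/-- The coefficients `C_m(k,ℓ) = Σ_{j,j'} [W(κ)^m]_{jj'} e^{i(k·y_{j'} - ℓ·y_j)}`. -/
def C3coef (n : ℕ) (y : Fin n → EuclideanSpace ℝ (Fin 3)) (α : Fin n → ℂ) (κ : ℝ)
    (m : ℕ) (k ℓ : EuclideanSpace ℝ (Fin 3)) : ℂ :=
  ∑ j, ∑ j', (W3 n y α κ ^ m) j j' *
    Complex.exp (Complex.I * ((inner ℝ k (y j') : ℝ) - (inner ℝ ℓ (y j) : ℝ)))

attribute [local instance] Matrix.linftyOpNormedRing Matrix.linftyOpNormedAlgebra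

set_option maxHeartbeats 1000000 in
/-- Remark 3.2, case d = 3: convergence of the high-energy expansion. -/
theorem stmt12 (n : ℕ) (y : Fin n → EuclideanSpace ℝ (Fin 3)) (α : Fin n → ℂ)
    (hy : Function.Injective y) :
    ∃ κ₀ > (0 : ℝ), ∀ κ ≥ κ₀, IsUnit (A3 n y α κ) ∧
      ∀ k ℓ : EuclideanSpace ℝ (Fin 3), ‖k‖ = κ → ‖ℓ‖ = κ →
        Summable (fun m : ℕ =>
          ‖(-4 * (Real.pi : ℂ) * Complex.I) ^ m *
              C3coef n y α κ m k ℓ / (κ : ℂ) ^ (m + 1)‖) ∧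
        f3 n y α κ k ℓ =
          -(Complex.I / (2 * (Real.pi : ℂ) ^ 2)) *
            ∑' m : ℕ, (-4 * (Real.pi : ℂ) * Complex.I) ^ m *
              C3coef n y α κ m k ℓ / (κ : ℂ) ^ (m + 1) := by
  classical
  have pi_pos := Real.pi_pos
  have hπ : (Real.pi : ℂ) ≠ 0 := Complex.ofReal_ne_zero.mpr (ne_of_gt pi_pos)
  -- entry norms are independent of κ
  have hWentry : ∀ (κ : ℝ) (j j' : Fin n),
      ‖W3 n y α κ j j'‖ = ‖W3 n y α 0 j j'‖ := by
    intro κ j j'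
    by_cases h : j = j'
    · simp [W3, h]
    · simp only [W3, h, if_false]
      rw [norm_div, norm_div, norm_neg, norm_neg]
      congr 1
      have h1 : ∀ t : ℝ, ‖Complex.exp (Complex.I * t * ‖y j - y j'‖)‖ = 1 := by
        intro t
        rw [Complex.norm_exp]
        simp
      rw [h1, h1]
  -- the uniform bound
  set B : ℝ := ∑ j : Fin n, ∑ j' : Fin n, ‖W3 n y α 0 j j'‖ with hBdef
  have hB0 : 0 ≤ B := Finset.sum_nonneg fun _ _ => Finset.sum_nonneg fun _ _ => norm_nonneg _
  have hWle : ∀ κ : ℝ, ‖W3 n y α κ‖ ≤ B := by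
    intro κ
    rw [Matrix.linfty_opNorm_def]
    rcases Nat.eq_zero_or_pos n with hn | hn
    · have he : (Finset.univ : Finset (Fin n)) = ∅ := by
        subst hn; rfl
      rw [he, Finset.sup_empty]
      simpa using hB0
    · obtain ⟨i, -, hi⟩ := Finset.exists_mem_eq_sup Finset.univ
        (Finset.univ_nonempty_iff.mpr ⟨⟨0, hn⟩⟩)
        (fun i : Fin n => ∑ j' : Fin n, ‖W3 n y α κ i j'‖₊)
      rw [hi, NNReal.coe_sum]
      calc (∑ j' : Fin n, (‖W3 n y α κ i j'‖₊ : ℝ))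
          = ∑ j' : Fin n, ‖W3 n y α 0 i j'‖ := by
            refine Finset.sum_congr rfl fun j' _ => ?_
            rw [coe_nnnorm, hWentry]
        _ ≤ B := Finset.single_le_sum
            (f := fun i => ∑ j' : Fin n, ‖W3 n y α 0 i j'‖)
            (fun _ _ => Finset.sum_nonneg fun _ _ => norm_nonneg _) (Finset.mem_univ i)
  refine ⟨8 * Real.pi * (B + 1), by positivity, ?_⟩
  intro κ hκ
  have hκpos : 0 < κ := lt_of_lt_of_le (by positivity) hκ
  have hκ0 : (κ : ℂ) ≠ 0 := Complex.ofReal_ne_zero.mpr (ne_of_gt hκpos)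
  set W := W3 n y α κ with hWdef
  set r : ℂ := -4 * (Real.pi : ℂ) * Complex.I / κ with hrdef
  set s : Matrix (Fin n) (Fin n) ℂ := r • W with hsdef
  have hrnorm : ‖r‖ = 4 * Real.pi / κ := by
    rw [hrdef]
    rw [norm_div]
    rw [norm_mul, norm_mul]
    simp only [Complex.norm_I, Complex.norm_real, Real.norm_eq_abs]
    rw [abs_of_pos pi_pos, abs_of_pos hκpos]
    norm_num
  have hs1 : ‖s‖ < 1 := by
    rw [hsdef]
    calc ‖r • W‖ = ‖r‖ * ‖W‖ := norm_smul r W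
      _ ≤ (4 * Real.pi / κ) * B := by
          rw [hrnorm]; exact mul_le_mul_of_nonneg_left (hWle κ) (by positivity)
      _ < 1 := by
          rw [div_mul_eq_mul_div, div_lt_one hκpos]
          have : 8 * Real.pi * (B + 1) ≤ κ := hκ
          nlinarith
  haveI : CompleteSpace (Matrix (Fin n) (Fin n) ℂ) := by infer_instance
  have hsum : Summable (fun m : ℕ => s ^ m) := summable_geometric_of_norm_lt_one hs1
  set T : Matrix (Fin n) (Fin n) ℂ := ∑' m : ℕ, s ^ m with hTdef
  have hgeom1 : (1 - s) * T = 1 := mul_neg_geom_series s hs1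
  have hgeom2 : T * (1 - s) = 1 := geom_series_mul_neg s hs1
  set c : ℂ := -(Complex.I * κ) / (4 * Real.pi) with hcdef
  have hc : c ≠ 0 := by
    rw [hcdef]
    apply div_ne_zero
    · simp [Complex.I_ne_zero, hκ0]
    · simp [hπ]
  have hcr : c * r = -1 := by
    rw [hcdef, hrdef]
    have hI : Complex.I * Complex.I = -1 := Complex.I_mul_I
    field_simp
    linear_combination hI
  have hA : A3 n y α κ = c • ((1 : Matrix (Fin n) (Fin n) ℂ) - s) := by
    ext i j
    simp only [A3, hsdef, hWdef, W3, Matrix.smul_apply, Matrix.sub_apply, Matrix.one_apply,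
      smul_eq_mul]
    by_cases h : i = j
    · subst h
      simp only [eq_self_iff_true, if_true]
      linear_combination (α i) * hcr - hcdef
    · simp only [if_neg h]
      linear_combination
        (-Complex.exp (Complex.I * κ * ‖y i - y j‖) / (4 * Real.pi * ‖y i - y j‖)) * hcr
  have hAB : A3 n y α κ * (c⁻¹ • T) = 1 := by
    rw [hA, Matrix.smul_mul, Matrix.mul_smul, hgeom1, smul_smul, mul_inv_cancel₀ hc, one_smul]
  have hBA : (c⁻¹ • T) * A3 n y α κ = 1 := by
    rw [hA, Matrix.smul_mul, Matrix.mul_smul, hgeom2, smul_smul, inv_mul_cancel₀ hc, one_smul]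
  have hUnit : IsUnit (A3 n y α κ) := ⟨⟨A3 n y α κ, c⁻¹ • T, hAB, hBA⟩, rfl⟩
  have hAinv : (A3 n y α κ)⁻¹ = c⁻¹ • T := Matrix.inv_eq_right_inv hAB
  refine ⟨hUnit, ?_⟩
  intro k ℓ _ _
  -- entry norm bound
  have hentry : ∀ (M : Matrix (Fin n) (Fin n) ℂ) (i j : Fin n), ‖M i j‖ ≤ ‖M‖ := by
    intro M i j
    rw [Matrix.linfty_opNorm_def]
    calc ‖M i j‖ ≤ ∑ j', ‖M i j'‖ :=
          Finset.single_le_sum (fun _ _ => norm_nonneg _) (Finset.mem_univ j)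
      _ ≤ _ := by
          have h := Finset.le_sup (f := fun i : Fin n => ∑ j' : Fin n, ‖M i j'‖₊)
            (Finset.mem_univ i)
          have := NNReal.coe_le_coe.mpr h
          simpa [NNReal.coe_sum] using this
  -- entrywise HasSum
  have hE : ∀ i j : Fin n, HasSum (fun m : ℕ => (s ^ m) i j) (T i j) := by
    intro i j
    let L : Matrix (Fin n) (Fin n) ℂ →L[ℂ] ℂ :=
      LinearMap.mkContinuous
        { toFun := fun M => M i j,
          map_add' := fun _ _ => rfl,
          map_smul' := fun _ _ => rfl } 1
        (fun M => by rw [one_mul]; exact hentry M i j)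
    exact hsum.hasSum.mapL L
  set e : Fin n → Fin n → ℂ := fun i j =>
    Complex.exp (Complex.I * ((inner ℝ k (y j) : ℝ) - (inner ℝ ℓ (y i) : ℝ))) with hedef
  have hterm : ∀ m : ℕ,
      (-4 * (Real.pi : ℂ) * Complex.I) ^ m * C3coef n y α κ m k ℓ / (κ : ℂ) ^ (m + 1)
        = (κ : ℂ)⁻¹ * ∑ i, ∑ j, (s ^ m) i j * e i j := by
    intro m
    have h1 : s ^ m = r ^ m • W ^ m := smul_pow r W m
    have h2 : ∑ i, ∑ j, (s ^ m) i j * e i j = r ^ m * C3coef n y α κ m k ℓ := by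
      simp only [C3coef, h1, Matrix.smul_apply, smul_eq_mul, Finset.mul_sum, ← hWdef, hedef]
      exact Finset.sum_congr rfl fun i _ => Finset.sum_congr rfl fun j _ => by ring
    rw [h2, hrdef, div_pow, pow_succ]
    ring
  have he1 : ∀ i j : Fin n, ‖e i j‖ = 1 := by
    intro i j
    rw [hedef]
    rw [Complex.norm_exp]
    simp
  have hpow : ∀ m : ℕ, ‖s ^ m‖ ≤ max ‖(1 : Matrix (Fin n) (Fin n) ℂ)‖ 1 * ‖s‖ ^ m := by
    intro m
    rcases Nat.eq_zero_or_pos m with hm | hm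
    · subst hm
      rw [pow_zero, pow_zero, mul_one]
      exact le_max_left _ _
    · calc ‖s ^ m‖ ≤ ‖s‖ ^ m := norm_pow_le' s hm
        _ ≤ _ := le_mul_of_one_le_left (by positivity) (le_max_right _ _)
  have hCsum : HasSum
      (fun m : ℕ => (-4 * (Real.pi : ℂ) * Complex.I) ^ m *
        C3coef n y α κ m k ℓ / (κ : ℂ) ^ (m + 1))
      ((κ : ℂ)⁻¹ * ∑ i, ∑ j, T i j * e i j) := by
    have h1 : HasSum (fun m : ℕ => ∑ i, ∑ j, (s ^ m) i j * e i j)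
        (∑ i, ∑ j, T i j * e i j) :=
      hasSum_sum fun i _ => hasSum_sum fun j _ => (hE i j).mul_right _
    have h2 := h1.mul_left ((κ : ℂ)⁻¹)
    simpa only [← hterm] using h2
  constructor
  · -- summability of norms
    refine Summable.of_nonneg_of_le (fun m => norm_nonneg _) ?_
      ((((summable_geometric_of_lt_one (norm_nonneg s) hs1).mul_left
        (max ‖(1 : Matrix (Fin n) (Fin n) ℂ)‖ 1)).mul_left ((n : ℝ) ^ 2)).mul_left κ⁻¹)
    · intro m
      rw [hterm m, norm_mul]
      have hn1 : ‖((κ : ℂ))⁻¹‖ = κ⁻¹ := by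
        rw [norm_inv, Complex.norm_real, Real.norm_of_nonneg hκpos.le]
      rw [hn1]
      apply mul_le_mul_of_nonneg_left _ (by positivity)
      calc ‖∑ i, ∑ j, (s ^ m) i j * e i j‖
          ≤ ∑ i, ∑ j, ‖(s ^ m) i j * e i j‖ := by
            refine (norm_sum_le _ _).trans (Finset.sum_le_sum fun i _ => norm_sum_le _ _)
        _ ≤ ∑ _i : Fin n, ∑ _j : Fin n,
              max ‖(1 : Matrix (Fin n) (Fin n) ℂ)‖ 1 * ‖s‖ ^ m := by
            refine Finset.sum_le_sum fun i _ => Finset.sum_le_sum fun j _ => ?_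
            rw [norm_mul, he1, mul_one]
            exact (hentry _ i j).trans (hpow m)
        _ = (n : ℝ) ^ 2 * (max ‖(1 : Matrix (Fin n) (Fin n) ℂ)‖ 1 * ‖s‖ ^ m) := by
            simp only [Finset.sum_const, Finset.card_univ, Fintype.card_fin, nsmul_eq_mul]
            ring
  · rw [hCsum.tsum_eq]
    simp only [f3, q3, hAinv, Matrix.mulVec, dotProduct, Matrix.smul_apply,
      smul_eq_mul]
    simp only [Finset.mul_sum, Finset.sum_mul]
    refine Finset.sum_congr rfl fun i _ => ?_
    refine Finset.sum_congr rfl fun j _ => ?_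
    have hexp : e i j = Complex.exp (Complex.I * (inner ℝ k (y j) : ℝ)) *
        Complex.exp (-Complex.I * (inner ℝ ℓ (y i) : ℝ)) := by
      simp only [hedef]
      rw [← Complex.exp_add]
      congr 1
      ring
    have hcinv : c⁻¹ = -r := inv_eq_of_mul_eq_one_right (by linear_combination -hcr)
    rw [hexp, hcinv, hrdef]
    field_simp
    ring
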